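/- Let $f:\mathbb{R}^N\times\mathbb{R}\to\mathbb{R}$ satisfy $|f(x,u)|\le\sum_{i=1}^m\gamma_i\,\xi_i(x)|u|^{\gamma_i-1}$ with $1<\gamma_i<p$ and $\xi_i\in L^{p/(p-\gamma_i)}(\mathbb{R}^N,[0,\infty))$. Suppose $(v_n)$ is a sequence in $L^p(\mathbb{R}^N)$ with $\sup_n\|v_n\|_{L^p}<\infty$ and $v_n\to 0$ in $L^p(K)$ for every compact set $K\subset\mathbb{R}^N$. Then $\int_{\mathbb{R}^N}|f(x,v_n(x))|\,|v_n(x)|\,dx\to 0$ as $n\to\infty$. -/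

import Mathlib

open MeasureTheory Filter

private lemma abs_rpow_mul (t g : ℝ) (hg : 1 < g) : |t| ^ (g - 1) * |t| = |t| ^ g := by
  rcases eq_or_ne t 0 with rfl | ht
  · simp [Real.zero_rpow (by linarith : g - 1 ≠ 0), Real.zero_rpow (by linarith : g ≠ 0)]
  · have h : (0:ℝ) < |t| := abs_pos.mpr ht
    calc |t| ^ (g - 1) * |t| = |t| ^ (g - 1) * |t| ^ (1:ℝ) := by rw [Real.rpow_one]
    _ = |t| ^ (g - 1 + 1) := (Real.rpow_add h _ _).symm
    _ = |t| ^ g := by ring_nf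

private lemma key_memr (N : ℕ) (p g : ℝ) (hp : 1 < p) (hg1 : 1 < g) (hgp : g < p)
    (v : ℕ → EuclideanSpace ℝ (Fin N) → ℝ)
    (hv : ∀ n, MemLp (v n) (ENNReal.ofReal p) volume) (n : ℕ) :
    MemLp (fun x => |v n x| ^ g) (ENNReal.ofReal (p / g)) volume := by
  have hg0 : (0:ℝ) < g := by linarith
  have h := (hv n).norm_rpow_div (ENNReal.ofReal g)
  rw [ENNReal.toReal_ofReal hg0.le] at h
  rw [← ENNReal.ofReal_div_of_pos hg0] at h
  simpa [Real.norm_eq_abs] using h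

private lemma key_integrable (N : ℕ) (p g : ℝ) (hp : 1 < p) (hg1 : 1 < g) (hgp : g < p)
    (ξ : EuclideanSpace ℝ (Fin N) → ℝ) (hξ0 : ∀ x, 0 ≤ ξ x)
    (hξ : MemLp ξ (ENNReal.ofReal (p / (p - g))) volume)
    (v : ℕ → EuclideanSpace ℝ (Fin N) → ℝ)
    (hv : ∀ n, MemLp (v n) (ENNReal.ofReal p) volume) (n : ℕ) :
    Integrable (fun x => ξ x * |v n x| ^ g) volume := by
  set q : ℝ := p / (p - g) with hq_def
  set r : ℝ := p / g with hr_def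
  have hpg : 0 < p - g := by linarith
  have hp0 : (0:ℝ) < p := by linarith
  have hg0 : (0:ℝ) < g := by linarith
  have hq1 : 1 < q := (one_lt_div hpg).mpr (by linarith)
  have hr1 : 1 < r := (one_lt_div hg0).mpr hgp
  have hq0 : (0:ℝ) < q := by linarith
  have hr0 : (0:ℝ) < r := by linarith
  have hconj : q.HolderConjugate r := by
    refine ⟨?_, hq0, hr0⟩
    rw [inv_eq_one_div, inv_eq_one_div, hq_def, hr_def, one_div_div, one_div_div,
      ← add_div, inv_one, div_eq_one_iff_eq hp0.ne']
    ring
  have h : MemLp (ξ • fun x => |v n x| ^ g) 1 volume := by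
    refine (key_memr N p g hp hg1 hgp v hv n).smul hξ (hpqr := ?_)
    have heq : (ENNReal.ofReal q)⁻¹ + (ENNReal.ofReal r)⁻¹ = 1 := by
      rw [← ENNReal.ofReal_inv_of_pos hq0, ← ENNReal.ofReal_inv_of_pos hr0,
        ← ENNReal.ofReal_add (by positivity) (by positivity), hconj.inv_add_inv_eq_one,
        ENNReal.ofReal_one]
    exact ⟨by simpa using heq⟩
  rw [memLp_one_iff_integrable] at h
  exact h.congr (Eventually.of_forall fun x => by simp [smul_eq_mul])

private lemma key (N : ℕ) (p g : ℝ) (hp : 1 < p) (hg1 : 1 < g) (hgp : g < p)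
    (ξ : EuclideanSpace ℝ (Fin N) → ℝ) (hξ0 : ∀ x, 0 ≤ ξ x)
    (hξ : MemLp ξ (ENNReal.ofReal (p / (p - g))) volume)
    (v : ℕ → EuclideanSpace ℝ (Fin N) → ℝ)
    (hv : ∀ n, MemLp (v n) (ENNReal.ofReal p) volume)
    (C : ℝ) (hC : ∀ n, ∫ x, |v n x| ^ p ≤ C)
    (hloc : ∀ K : Set (EuclideanSpace ℝ (Fin N)), IsCompact K →
      Tendsto (fun n => ∫ x in K, |v n x| ^ p) atTop (nhds 0)) :
    Tendsto (fun n => ∫ x, ξ x * |v n x| ^ g) atTop (nhds 0) := by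
  set q : ℝ := p / (p - g) with hq_def
  set r : ℝ := p / g with hr_def
  have hpg : 0 < p - g := by linarith
  have hp0 : (0:ℝ) < p := by linarith
  have hg0 : (0:ℝ) < g := by linarith
  have hq1 : 1 < q := (one_lt_div hpg).mpr (by linarith)
  have hr1 : 1 < r := (one_lt_div hg0).mpr hgp
  have hq0 : (0:ℝ) < q := by linarith
  have hr0 : (0:ℝ) < r := by linarith
  have hconj : q.HolderConjugate r := by
    refine ⟨?_, hq0, hr0⟩
    rw [inv_eq_one_div, inv_eq_one_div, hq_def, hr_def, one_div_div, one_div_div,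
      ← add_div, inv_one, div_eq_one_iff_eq hp0.ne']
    ring
  have hvr : ∀ n, MemLp (fun x => |v n x| ^ g) (ENNReal.ofReal r) volume :=
    fun n => key_memr N p g hp hg1 hgp v hv n
  have intg : ∀ n, Integrable (fun x => ξ x * |v n x| ^ g) volume :=
    fun n => key_integrable N p g hp hg1 hgp ξ hξ0 hξ v hv n
  -- integrability of ξ^q
  have Ξint : Integrable (fun x => ξ x ^ q) volume := by
    have h := hξ.norm_rpow (by simp [hq0] : ENNReal.ofReal q ≠ 0) (by simp)
    rw [memLp_one_iff_integrable] at h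
    rw [ENNReal.toReal_ofReal hq0.le] at h
    exact h.congr (Eventually.of_forall fun x => by
      simp [Real.norm_eq_abs, abs_of_nonneg (hξ0 x)])
  -- integrability of |v n|^p
  have Vint : ∀ n, Integrable (fun x => |v n x| ^ p) volume := by
    intro n
    have h := (hv n).norm_rpow (by simp [hp0] : ENNReal.ofReal p ≠ 0) (by simp)
    rw [memLp_one_iff_integrable] at h
    rw [ENNReal.toReal_ofReal hp0.le] at h
    exact h.congr (Eventually.of_forall fun x => by simp [Real.norm_eq_abs])
  have hVle : ∀ n (s : Set (EuclideanSpace ℝ (Fin N))), ∫ x in s, |v n x| ^ p ≤ C := by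
    intro n s
    refine le_trans ?_ (hC n)
    exact setIntegral_le_integral (Vint n)
      (Eventually.of_forall fun x => Real.rpow_nonneg (abs_nonneg _) _)
  have hC0 : 0 ≤ C :=
    le_trans (integral_nonneg fun x => Real.rpow_nonneg (abs_nonneg _) _) (hC 0)
  -- tail of ∫ ξ^q
  have htail : Tendsto (fun k : ℕ => ∫ x in (Metric.closedBall (0:EuclideanSpace ℝ (Fin N)) k)ᶜ,
      ξ x ^ q) atTop (nhds 0) := by
    have hmono : Monotone fun k : ℕ => Metric.closedBall (0:EuclideanSpace ℝ (Fin N)) (k:ℝ) :=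
      fun a b hab => Metric.closedBall_subset_closedBall (by exact_mod_cast hab)
    have hunion : (⋃ k : ℕ, Metric.closedBall (0:EuclideanSpace ℝ (Fin N)) (k:ℝ)) = Set.univ := by
      ext x
      simp only [Set.mem_iUnion, Metric.mem_closedBall, dist_zero_right, Set.mem_univ, iff_true]
      exact exists_nat_ge ‖x‖
    have h1 : Tendsto (fun k : ℕ => ∫ x in Metric.closedBall (0:EuclideanSpace ℝ (Fin N)) (k:ℝ),
        ξ x ^ q) atTop (nhds (∫ x, ξ x ^ q)) := by
      have := tendsto_setIntegral_of_monotone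
        (fun k : ℕ => measurableSet_closedBall) hmono
        (by rw [hunion]; exact Ξint.integrableOn)
      rwa [hunion, setIntegral_univ] at this
    have h2 : ∀ k : ℕ, ∫ x in (Metric.closedBall (0:EuclideanSpace ℝ (Fin N)) (k:ℝ))ᶜ, ξ x ^ q
        = (∫ x, ξ x ^ q) - ∫ x in Metric.closedBall (0:EuclideanSpace ℝ (Fin N)) (k:ℝ), ξ x ^ q := by
      intro k
      have := integral_add_compl (measurableSet_closedBall
        (x := (0:EuclideanSpace ℝ (Fin N))) (ε := (k:ℝ))) Ξint
      linarith
    simp_rw [h2]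
    have := h1.const_sub (∫ x, ξ x ^ q)
    simpa using this
  -- Hölder on a set
  have holder : ∀ n (s : Set (EuclideanSpace ℝ (Fin N))), MeasurableSet s →
      ∫ x in s, ξ x * |v n x| ^ g ≤
        (∫ x in s, ξ x ^ q) ^ (1/q) * (∫ x in s, |v n x| ^ p) ^ (1/r) := by
    intro n s hs
    have h := integral_mul_le_Lp_mul_Lq_of_nonneg (μ := volume.restrict s) hconj
      (Eventually.of_forall hξ0)
      (Eventually.of_forall fun x => Real.rpow_nonneg (abs_nonneg _) _)
      (hξ.restrict s) ((hvr n).restrict s)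
    have hco : ∀ x : EuclideanSpace ℝ (Fin N), (|v n x| ^ g) ^ r = |v n x| ^ p := by
      intro x
      rw [← Real.rpow_mul (abs_nonneg _)]
      congr 1
      rw [hr_def, mul_comm, div_mul_cancel₀ _ hg0.ne']
    refine le_trans h (le_of_eq ?_)
    congr 2
    exact integral_congr_ae (Eventually.of_forall fun x => hco x)
  -- nonnegativity facts
  have hTnn : ∀ n (s : Set (EuclideanSpace ℝ (Fin N))), MeasurableSet s →
      0 ≤ ∫ x in s, ξ x * |v n x| ^ g := by
    intro n s hs
    exact setIntegral_nonneg hs fun x _ =>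
      mul_nonneg (hξ0 x) (Real.rpow_nonneg (abs_nonneg _) _)
  have hΞnn : ∀ s : Set (EuclideanSpace ℝ (Fin N)), MeasurableSet s →
      0 ≤ ∫ x in s, ξ x ^ q := by
    intro s hs
    exact setIntegral_nonneg hs fun x _ => Real.rpow_nonneg (hξ0 x) _
  have hVnn : ∀ n (s : Set (EuclideanSpace ℝ (Fin N))), MeasurableSet s →
      0 ≤ ∫ x in s, |v n x| ^ p := by
    intro n s hs
    exact setIntegral_nonneg hs fun x _ => Real.rpow_nonneg (abs_nonneg _) _
  -- epsilon argument
  rw [Metric.tendsto_atTop]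
  intro ε hε
  -- choose radius k with small tail contribution
  have htail2 : Tendsto (fun k : ℕ =>
      (∫ x in (Metric.closedBall (0:EuclideanSpace ℝ (Fin N)) k)ᶜ, ξ x ^ q) ^ (1/q) * C ^ (1/r))
      atTop (nhds 0) := by
    have h1 := htail.rpow_const (Or.inr (by positivity : (0:ℝ) ≤ 1/q))
    rw [Real.zero_rpow (by positivity : (1:ℝ)/q ≠ 0)] at h1
    simpa using h1.mul_const (C ^ (1/r))
  obtain ⟨k, hk⟩ := (Metric.tendsto_atTop.mp htail2 (ε/2) (by linarith)).imp
    (fun k hk => hk k le_rfl)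
  set K : Set (EuclideanSpace ℝ (Fin N)) := Metric.closedBall 0 (k:ℝ) with hK_def
  have hKm : MeasurableSet K := measurableSet_closedBall
  have hKc : IsCompact K := isCompact_closedBall _ _
  rw [Real.dist_eq, sub_zero, abs_of_nonneg (mul_nonneg
    (Real.rpow_nonneg (hΞnn _ hKm.compl) _) (Real.rpow_nonneg hC0 _))] at hk
  -- tail bound uniform in n
  have htailb : ∀ n, ∫ x in Kᶜ, ξ x * |v n x| ^ g < ε/2 := by
    intro n
    refine lt_of_le_of_lt ?_ hk
    refine le_trans (holder n Kᶜ hKm.compl) ?_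
    exact mul_le_mul_of_nonneg_left
      (Real.rpow_le_rpow (hVnn n _ hKm.compl) (hVle n _) (by positivity))
      (Real.rpow_nonneg (hΞnn _ hKm.compl) _)
  -- ball part tends to zero
  have hball : Tendsto (fun n => (∫ x, ξ x ^ q) ^ (1/q) * (∫ x in K, |v n x| ^ p) ^ (1/r))
      atTop (nhds 0) := by
    have h1 := (hloc K hKc).rpow_const (Or.inr (by positivity : (0:ℝ) ≤ 1/r))
    rw [Real.zero_rpow (by positivity : (1:ℝ)/r ≠ 0)] at h1
    simpa using h1.const_mul ((∫ x, ξ x ^ q) ^ (1/q))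
  obtain ⟨M, hM⟩ := Metric.tendsto_atTop.mp hball (ε/2) (by linarith)
  refine ⟨M, fun n hn => ?_⟩
  have hMn := hM n hn
  rw [Real.dist_eq, sub_zero] at hMn
  have hballb : ∫ x in K, ξ x * |v n x| ^ g < ε/2 := by
    refine lt_of_le_of_lt ?_ (lt_of_abs_lt hMn)
    refine le_trans (holder n K hKm) ?_
    refine mul_le_mul_of_nonneg_right ?_ (Real.rpow_nonneg (hVnn n _ hKm) _)
    refine Real.rpow_le_rpow (hΞnn _ hKm) ?_ (by positivity)
    exact setIntegral_le_integral Ξint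
      (Eventually.of_forall fun x => Real.rpow_nonneg (hξ0 x) _)
  have hsplit : ∫ x, ξ x * |v n x| ^ g =
      (∫ x in K, ξ x * |v n x| ^ g) + ∫ x in Kᶜ, ξ x * |v n x| ^ g :=
    (integral_add_compl hKm (intg n)).symm
  rw [Real.dist_eq, sub_zero, abs_of_nonneg (integral_nonneg fun x =>
    mul_nonneg (hξ0 x) (Real.rpow_nonneg (abs_nonneg _) _))]
  rw [hsplit]
  linarith [htailb n]


theorem stmt5 (N m : ℕ) (hm : 1 ≤ m) (p : ℝ) (hp : 1 < p)
    (γ : Fin m → ℝ) (hγ : ∀ i, 1 < γ i ∧ γ i < p)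
    (ξ : Fin m → EuclideanSpace ℝ (Fin N) → ℝ) (hξ0 : ∀ i x, 0 ≤ ξ i x)
    (hξ : ∀ i, MemLp (ξ i) (ENNReal.ofReal (p / (p - γ i))) volume)
    (f : EuclideanSpace ℝ (Fin N) → ℝ → ℝ)
    (hf : ∀ x t, |f x t| ≤ ∑ i, γ i * ξ i x * |t| ^ (γ i - 1))
    (v : ℕ → EuclideanSpace ℝ (Fin N) → ℝ)
    (hv : ∀ n, MemLp (v n) (ENNReal.ofReal p) volume)
    (C : ℝ) (hC : ∀ n, ∫ x, |v n x| ^ p ≤ C)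
    (hloc : ∀ K : Set (EuclideanSpace ℝ (Fin N)), IsCompact K →
      Tendsto (fun n => ∫ x in K, |v n x| ^ p) atTop (nhds 0))
    (hfm : ∀ n, AEStronglyMeasurable (fun x => f x (v n x)) volume) :
    Tendsto (fun n => ∫ x, |f x (v n x)| * |v n x|) atTop (nhds 0) := by
  have hInt : ∀ (i : Fin m) (n : ℕ),
      Integrable (fun x => ξ i x * |v n x| ^ γ i) volume := fun i n =>
    key_integrable N p (γ i) hp (hγ i).1 (hγ i).2 (ξ i) (hξ0 i) (hξ i) v hv n
  have hTi : ∀ i : Fin m, Tendsto (fun n => ∫ x, ξ i x * |v n x| ^ γ i) atTop (nhds 0) :=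
    fun i => key N p (γ i) hp (hγ i).1 (hγ i).2 (ξ i) (hξ0 i) (hξ i) v hv C hC hloc
  have hsum : Tendsto (fun n => ∑ i, γ i * ∫ x, ξ i x * |v n x| ^ γ i) atTop (nhds 0) := by
    have h := tendsto_finset_sum Finset.univ (fun i (_ : i ∈ Finset.univ) => (hTi i).const_mul (γ i))
    simpa using h
  refine squeeze_zero (fun n => integral_nonneg fun x =>
    mul_nonneg (abs_nonneg _) (abs_nonneg _)) (fun n => ?_) hsum
  -- pointwise bound
  have hb : ∀ x, |f x (v n x)| * |v n x| ≤ ∑ i, γ i * (ξ i x * |v n x| ^ γ i) := by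
    intro x
    calc |f x (v n x)| * |v n x|
        ≤ (∑ i, γ i * ξ i x * |v n x| ^ (γ i - 1)) * |v n x| :=
          mul_le_mul_of_nonneg_right (hf x _) (abs_nonneg _)
      _ = ∑ i, γ i * (ξ i x * |v n x| ^ γ i) := by
          rw [Finset.sum_mul]
          refine Finset.sum_congr rfl fun i _ => ?_
          have h2 := abs_rpow_mul (v n x) (γ i) (hγ i).1
          calc γ i * ξ i x * |v n x| ^ (γ i - 1) * |v n x|
              = γ i * (ξ i x * (|v n x| ^ (γ i - 1) * |v n x|)) := by ring
            _ = γ i * (ξ i x * |v n x| ^ γ i) := by rw [h2]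
  have hIsum : Integrable (fun x => ∑ i, γ i * (ξ i x * |v n x| ^ γ i)) volume :=
    integrable_finset_sum _ fun i _ => (hInt i n).const_mul (γ i)
  have hmeas : AEStronglyMeasurable (fun x => |f x (v n x)| * |v n x|) volume := by
    refine ((hfm n).norm.mul (hv n).1.norm).congr ?_
    exact Eventually.of_forall fun x => by simp [Real.norm_eq_abs]
  have h1 : Integrable (fun x => |f x (v n x)| * |v n x|) volume := by
    refine Integrable.mono' hIsum hmeas (Eventually.of_forall fun x => ?_)
    rw [Real.norm_eq_abs, abs_of_nonneg (mul_nonneg (abs_nonneg _) (abs_nonneg _))]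
    exact hb x
  calc ∫ x, |f x (v n x)| * |v n x|
      ≤ ∫ x, ∑ i, γ i * (ξ i x * |v n x| ^ γ i) := integral_mono h1 hIsum hb
    _ = ∑ i, γ i * ∫ x, ξ i x * |v n x| ^ γ i := by
        rw [integral_finset_sum _ fun i _ => (hInt i n).const_mul (γ i)]
        exact Finset.sum_congr rfl fun i _ => integral_const_mul _ _
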